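/- Let $X_i = \theta + \xi_i$, $i=1,\dots,n$, be i.i.d. with $\theta = \inf\{t : U(t) \ge 1/2\}$ where $U(t) = \mathbb{P}((X_1+X_2)/2 \le t)$. Suppose there exist $c_0, \kappa_0 > 0$ such that $U'(\theta+\delta) \ge \kappa_0$ for all $|\delta| \le c_0$. Let $\hat\theta = \inf\{t : U_n(t) \ge 1/2\}$ where $U_n(t) = \frac{1}{n(n-1)}\sum_{i \neq j}\mathbb{I}\{(X_i+X_j)/2 \le t\}$. Then for every $z > 0$, $\mathbb{P}(|\hat\theta - \theta| > z) \le 2\exp\{-n\kappa_0^2 (z \wedge c_0)^2\}$. -/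

import Mathlib

open MeasureTheory ProbabilityTheory Real Finset

namespace HLthm

/-- Cubic refinement of `log (1-x) ≤ -x`. -/
lemma log_one_sub_le {x : ℝ} (h0 : 0 ≤ x) (h1 : x < 1) :
    Real.log (1 - x) ≤ -(x + x ^ 2 / 2 + x ^ 3 / 3) := by
  set f : ℝ → ℝ := fun y => -(y + y ^ 2 / 2 + y ^ 3 / 3) - Real.log (1 - y) with hf
  have key : MonotoneOn f (Set.Ico (0:ℝ) 1) := by
    have hder : ∀ y ∈ interior (Set.Ico (0:ℝ) 1), HasDerivAt f (y ^ 3 / (1 - y)) y := by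
      intro y hy
      rw [interior_Ico] at hy
      obtain ⟨hy0, hy1⟩ := hy
      have h1y : (1:ℝ) - y ≠ 0 := by linarith
      have hlog : HasDerivAt (fun y : ℝ => Real.log (1 - y)) ((-1) / (1 - y)) y := by
        have := (Real.hasDerivAt_log h1y).comp y ((hasDerivAt_id y).const_sub 1)
        simpa [div_eq_mul_inv, mul_comm, Function.comp_def] using this
      have hpoly : HasDerivAt (fun y : ℝ => -(y + y ^ 2 / 2 + y ^ 3 / 3))
          (-(1 + y + y ^ 2)) y := by
        have : HasDerivAt (fun y : ℝ => y + y ^ 2 / 2 + y ^ 3 / 3)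
            (1 + y + y ^ 2) y := by
          have h1 : HasDerivAt (fun y : ℝ => y) 1 y := hasDerivAt_id y
          have h2 : HasDerivAt (fun y : ℝ => y ^ 2 / 2) y y := by
            simpa using (hasDerivAt_pow 2 y).div_const 2
          have h3 : HasDerivAt (fun y : ℝ => y ^ 3 / 3) (y ^ 2) y := by
            simpa using (hasDerivAt_pow 3 y).div_const 3
          exact (h1.add h2).add h3
        exact this.neg
      have := hpoly.sub hlog
      exact this.congr_deriv (by field_simp; ring)
    have hcont : ContinuousOn f (Set.Ico (0:ℝ) 1) := by
      apply ContinuousOn.sub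
      · fun_prop
      · apply ContinuousOn.log (by fun_prop)
        intro y hy
        have := hy.2
        simp only [Set.mem_Ico] at hy
        intro h
        nlinarith [hy.1, hy.2]
    apply monotoneOn_of_deriv_nonneg (convex_Ico 0 1) hcont
    · intro y hy
      exact (hder y hy).differentiableAt.differentiableWithinAt
    · intro y hy
      rw [(hder y hy).deriv]
      rw [interior_Ico] at hy
      obtain ⟨hy0, hy1⟩ := hy
      have h1 : (0:ℝ) < 1 - y := by linarith
      have h2 : (0:ℝ) ≤ y ^ 3 := by positivity
      exact div_nonneg h2 h1.le
  have h00 : f 0 = 0 := by simp [hf]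
  have := key (Set.mem_Ico.2 ⟨le_refl 0, by norm_num⟩) (Set.mem_Ico.2 ⟨h0, h1⟩) h0
  rw [h00] at this
  simp only [hf, sub_nonneg] at this
  linarith

/-- number of offdiagonal ordered pairs -/
lemma sum_offdiag_one {n : ℕ} :
    (∑ i : Fin n, ∑ j : Fin n, if i ≠ j then (1:ℝ) else 0) = (n:ℝ) * ((n:ℝ) - 1) := by
  have h : ∀ i : Fin n, (∑ j : Fin n, if i ≠ j then (1:ℝ) else 0) = (n:ℝ) - 1 := by
    intro i
    have : ∀ j : Fin n, (if i ≠ j then (1:ℝ) else 0) = 1 - (if i = j then 1 else 0) := by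
      intro j; by_cases hij : i = j <;> simp [hij]
    rw [Finset.sum_congr rfl (fun j _ => this j), Finset.sum_sub_distrib]
    simp [Finset.card_univ]
  rw [Finset.sum_congr rfl (fun i _ => h i)]
  simp [Finset.card_univ, mul_comm]
  ring

end HLthm


namespace HLthm2

lemma exists_perm_pair {n : ℕ} {a b a' b' : Fin n} (hab : a ≠ b) (hab' : a' ≠ b') :
    ∃ ρ : Equiv.Perm (Fin n), ρ a = a' ∧ ρ b = b' := by
  refine ⟨(Equiv.swap ((Equiv.swap a a') b) b') * (Equiv.swap a a'), ?_, ?_⟩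
  · have h1 : Equiv.swap a a' a = a' := Equiv.swap_apply_left a a'
    have hca : (Equiv.swap a a') b ≠ a' := fun h =>
      hab ((Equiv.swap a a').injective (h.trans h1.symm)).symm
    rw [Equiv.Perm.mul_apply, h1]
    exact Equiv.swap_apply_of_ne_of_ne hca.symm hab'
  · rw [Equiv.Perm.mul_apply]
    exact Equiv.swap_apply_left _ _

lemma perm_sum_pair_eq {n : ℕ} (g : Fin n → Fin n → ℝ) {a b a' b' : Fin n}
    (hab : a ≠ b) (hab' : a' ≠ b') :
    ∑ σ : Equiv.Perm (Fin n), g (σ a) (σ b) = ∑ σ : Equiv.Perm (Fin n), g (σ a') (σ b') := by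
  obtain ⟨ρ, ha, hb⟩ := exists_perm_pair hab hab'
  calc ∑ σ : Equiv.Perm (Fin n), g (σ a) (σ b)
      = ∑ σ : Equiv.Perm (Fin n), g ((Equiv.mulRight ρ σ) a) ((Equiv.mulRight ρ σ) b) := by
        apply Fintype.sum_equiv (Equiv.mulRight ρ).symm
        intro σ
        simp
    _ = ∑ σ : Equiv.Perm (Fin n), g (σ a') (σ b') := by
        apply Finset.sum_congr rfl
        intro σ _
        simp only [Equiv.coe_mulRight, Equiv.Perm.mul_apply]
        rw [ha, hb]

lemma perm_sum_count {n : ℕ} (g : Fin n → Fin n → ℝ) (hg : ∀ i, g i i = 0)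
    {a b : Fin n} (hab : a ≠ b) :
    ((n:ℝ) * ((n:ℝ) - 1)) * ∑ σ : Equiv.Perm (Fin n), g (σ a) (σ b)
      = (Nat.factorial n : ℝ) * ∑ i : Fin n, ∑ j : Fin n, g i j := by
  have h1 : ∀ σ : Equiv.Perm (Fin n),
      (∑ i : Fin n, ∑ j : Fin n, g (σ i) (σ j)) = ∑ i : Fin n, ∑ j : Fin n, g i j := by
    intro σ
    refine Fintype.sum_equiv σ _ _ (fun i => ?_)
    exact Fintype.sum_equiv σ _ _ (fun j => rfl)
  have h3 : ∀ a' b' : Fin n, (∑ σ : Equiv.Perm (Fin n), g (σ a') (σ b'))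
      = if a' ≠ b' then ∑ σ : Equiv.Perm (Fin n), g (σ a) (σ b) else 0 := by
    intro a' b'
    by_cases h : a' = b'
    · subst h
      simp [hg]
    · rw [if_pos h, perm_sum_pair_eq g h hab]
  have h2 : (∑ a' : Fin n, ∑ b' : Fin n, ∑ σ : Equiv.Perm (Fin n), g (σ a') (σ b'))
      = (Nat.factorial n : ℝ) * ∑ i : Fin n, ∑ j : Fin n, g i j := by
    rw [Finset.sum_comm]
    have : ∀ b' : Fin n, (∑ a' : Fin n, ∑ σ : Equiv.Perm (Fin n), g (σ a') (σ b'))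
        = ∑ σ : Equiv.Perm (Fin n), ∑ a' : Fin n, g (σ a') (σ b') := fun b' => Finset.sum_comm
    rw [Finset.sum_congr rfl (fun b' _ => this b'), Finset.sum_comm]
    have hσ : ∀ σ : Equiv.Perm (Fin n), (∑ b' : Fin n, ∑ a' : Fin n, g (σ a') (σ b'))
        = ∑ i : Fin n, ∑ j : Fin n, g i j := by
      intro σ
      rw [Finset.sum_comm]
      exact h1 σ
    rw [Finset.sum_congr rfl (fun σ _ => hσ σ), Finset.sum_const, Finset.card_univ,
      Fintype.card_perm, Fintype.card_fin, nsmul_eq_mul]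
  calc ((n:ℝ) * ((n:ℝ) - 1)) * ∑ σ : Equiv.Perm (Fin n), g (σ a) (σ b)
      = ∑ a' : Fin n, ∑ b' : Fin n,
          (if a' ≠ b' then ∑ σ : Equiv.Perm (Fin n), g (σ a) (σ b) else 0) := by
        have : ∀ a' b' : Fin n, (if a' ≠ b' then ∑ σ : Equiv.Perm (Fin n), g (σ a) (σ b) else 0)
            = (if a' ≠ b' then (1:ℝ) else 0) * ∑ σ : Equiv.Perm (Fin n), g (σ a) (σ b) := by
          intro a' b'; by_cases h : a' ≠ b' <;> simp [h]
        simp_rw [this, ← Finset.sum_mul]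
        rw [HLthm.sum_offdiag_one]
    _ = ∑ a' : Fin n, ∑ b' : Fin n, ∑ σ : Equiv.Perm (Fin n), g (σ a') (σ b') := by
        exact Finset.sum_congr rfl (fun a' _ => Finset.sum_congr rfl (fun b' _ => (h3 a' b').symm))
    _ = (Nat.factorial n : ℝ) * ∑ i : Fin n, ∑ j : Fin n, g i j := h2

lemma decomp {n : ℕ} (hn : 2 ≤ n) (g : Fin n → Fin n → ℝ) (hg : ∀ i, g i i = 0) :
    (1 / ((n:ℝ) * ((n:ℝ) - 1))) * (∑ i : Fin n, ∑ j : Fin n, g i j)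
      = ∑ σ : Equiv.Perm (Fin n), ((Nat.factorial n : ℝ))⁻¹ *
          (((((n/2 : ℕ) : ℕ) : ℝ))⁻¹ * ∑ r : Fin (n/2),
            g (σ ⟨2*r.1, by have := r.2; omega⟩) (σ ⟨2*r.1+1, by have := r.2; omega⟩)) := by
  have hab : (⟨0, by omega⟩ : Fin n) ≠ ⟨1, by omega⟩ := by
    intro h
    have h2 : (0:ℕ) = 1 := congrArg Fin.val h
    omega
  set T := ∑ σ : Equiv.Perm (Fin n), g (σ ⟨0, by omega⟩) (σ ⟨1, by omega⟩) with hT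
  have hcount := perm_sum_count g hg hab
  rw [← hT] at hcount
  have hswap : ∑ σ : Equiv.Perm (Fin n), ((Nat.factorial n : ℝ))⁻¹ *
        ((((n/2 : ℕ) : ℝ))⁻¹ * ∑ r : Fin (n/2),
          g (σ ⟨2*r.1, by have := r.2; omega⟩) (σ ⟨2*r.1+1, by have := r.2; omega⟩))
      = ((Nat.factorial n : ℝ))⁻¹ * ((((n/2 : ℕ) : ℝ))⁻¹ *
          ∑ r : Fin (n/2), ∑ σ : Equiv.Perm (Fin n),
            g (σ ⟨2*r.1, by have := r.2; omega⟩) (σ ⟨2*r.1+1, by have := r.2; omega⟩)) := by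
    rw [← Finset.mul_sum, ← Finset.mul_sum, Finset.sum_comm]
  have hr : ∀ r : Fin (n/2), (∑ σ : Equiv.Perm (Fin n),
        g (σ ⟨2*r.1, by have := r.2; omega⟩) (σ ⟨2*r.1+1, by have := r.2; omega⟩)) = T := by
    intro r
    apply perm_sum_pair_eq
    · intro h
      have h2 : 2*r.1 = 2*r.1+1 := congrArg Fin.val h
      omega
    · exact hab
  rw [hswap, Finset.sum_congr rfl (fun r _ => hr r), Finset.sum_const, Finset.card_univ,
    Fintype.card_fin, nsmul_eq_mul]
  have hk : (0:ℝ) < ((n/2 : ℕ) : ℝ) := by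
    have : 1 ≤ n/2 := by omega
    exact_mod_cast Nat.lt_of_lt_of_le Nat.zero_lt_one this
  have hfac : (0:ℝ) < (Nat.factorial n : ℝ) := by exact_mod_cast Nat.factorial_pos n
  have hnn : (0:ℝ) < (n:ℝ) * ((n:ℝ) - 1) := by
    have h2 : (2:ℝ) ≤ (n:ℝ) := by exact_mod_cast hn
    nlinarith
  have hn1 : (n:ℝ) - 1 ≠ 0 := by
    have h2 : (2:ℝ) ≤ (n:ℝ) := by exact_mod_cast hn
    linarith
  field_simp
  linear_combination (-1) * hcount

end HLthm2


namespace HLthm3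

variable {Ω : Type*} [MeasureSpace Ω] [IsProbabilityMeasure (ℙ : Measure Ω)]
    {n : ℕ} {X : Fin n → Ω → ℝ}

lemma pair_integral_eq (hmeas : ∀ i, Measurable (X i))
    (hindep : iIndepFun X ℙ)
    (hident : ∀ i j, IdentDistrib (X i) (X j) ℙ ℙ)
    {i j i' j' : Fin n} (hij : i ≠ j) (hij' : i' ≠ j')
    (ψ : ℝ → ℝ → ℝ) (hψm : Measurable fun p : ℝ × ℝ => ψ p.1 p.2) :
    ∫ ω, ψ (X i ω) (X j ω) ∂ℙ = ∫ ω, ψ (X i' ω) (X j' ω) ∂ℙ := by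
  have hpair : ∀ a b : Fin n, a ≠ b → Measure.map (fun ω => (X a ω, X b ω)) ℙ
      = (Measure.map (X a) ℙ).prod (Measure.map (X b) ℙ) := fun a b hab =>
    (indepFun_iff_map_prod_eq_prod_map_map (hmeas a).aemeasurable
      (hmeas b).aemeasurable).mp (hindep.indepFun hab)
  have hm : ∀ a b : Fin n, Measurable (fun ω => (X a ω, X b ω)) := fun a b =>
    (hmeas a).prodMk (hmeas b)
  have e1 : ∫ ω, ψ (X i ω) (X j ω) ∂ℙ
      = ∫ p : ℝ × ℝ, ψ p.1 p.2 ∂(Measure.map (fun ω => (X i ω, X j ω)) ℙ) := by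
    rw [integral_map (hm i j).aemeasurable hψm.aestronglyMeasurable]
  have e2 : ∫ ω, ψ (X i' ω) (X j' ω) ∂ℙ
      = ∫ p : ℝ × ℝ, ψ p.1 p.2 ∂(Measure.map (fun ω => (X i' ω, X j' ω)) ℙ) := by
    rw [integral_map (hm i' j').aemeasurable hψm.aestronglyMeasurable]
  rw [e1, e2, hpair i j hij, hpair i' j' hij',
    (hident i i').map_eq, (hident j j').map_eq]

lemma prod_pair_integral (hmeas : ∀ i, Measurable (X i))
    (hindep : iIndepFun X ℙ) :
    ∀ (m : ℕ) (c : Fin m × Bool → Fin n), Function.Injective c →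
      ∀ (ψ : ℝ → ℝ → ℝ), (Measurable fun p : ℝ × ℝ => ψ p.1 p.2) →
      ∀ (C : ℝ), (∀ x y, |ψ x y| ≤ C) →
      ∫ ω, ∏ r : Fin m, ψ (X (c (r, false)) ω) (X (c (r, true)) ω) ∂ℙ
        = ∏ r : Fin m, ∫ ω, ψ (X (c (r, false)) ω) (X (c (r, true)) ω) ∂ℙ := by
  intro m
  induction m with
  | zero =>
    intro c hc ψ hψm C hbd
    simp
  | succ m IH =>
    intro c hc ψ hψm C hbd
    have hC0 : 0 ≤ C := le_trans (abs_nonneg _) (hbd 0 0)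
    set S : Finset (Fin n) := {c (0, false), c (0, true)} with hS
    set T : Finset (Fin n) := Finset.image (fun p : Fin m × Bool => c (p.1.succ, p.2)) univ with hT
    have hST : Disjoint S T := by
      rw [Finset.disjoint_left]
      intro x hxS hxT
      rw [hT, Finset.mem_image] at hxT
      obtain ⟨p, -, hp⟩ := hxT
      have hb : ∃ b : Bool, x = c (0, b) := by
        rcases Finset.mem_insert.mp hxS with h | h
        · exact ⟨false, h⟩
        · exact ⟨true, Finset.mem_singleton.mp h⟩
      obtain ⟨b, hb⟩ := hb
      have h0 : (p.1.succ, p.2) = ((0 : Fin (m+1)), b) := hc (hp.trans hb)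
      exact Fin.succ_ne_zero p.1 (congrArg Prod.fst h0)
    have hmemf : c (0,false) ∈ S := Finset.mem_insert_self _ _
    have hmemt : c (0,true) ∈ S := Finset.mem_insert_of_mem (Finset.mem_singleton_self _)
    have hmemTf : ∀ r : Fin m, c (r.succ, false) ∈ T := fun r =>
      Finset.mem_image.mpr ⟨(r, false), Finset.mem_univ _, rfl⟩
    have hmemTt : ∀ r : Fin m, c (r.succ, true) ∈ T := fun r =>
      Finset.mem_image.mpr ⟨(r, true), Finset.mem_univ _, rfl⟩
    set F₁ : Ω → ℝ := fun ω => ψ (X (c (0, false)) ω) (X (c (0, true)) ω) with hF₁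
    set F₂ : Ω → ℝ :=
      fun ω => ∏ r : Fin m, ψ (X (c (r.succ, false)) ω) (X (c (r.succ, true)) ω) with hF₂
    have hind : IndepFun F₁ F₂ ℙ := by
      have base := hindep.indepFun_finset S T hST hmeas
      have h1 : F₁ = (fun v : (i : S) → ℝ => ψ (v ⟨c (0,false), hmemf⟩) (v ⟨c (0,true), hmemt⟩))
          ∘ (fun a (i : S) => X i a) := rfl
      have h2 : F₂ = (fun v : (i : T) → ℝ =>
          ∏ r : Fin m, ψ (v ⟨c (r.succ,false), hmemTf r⟩) (v ⟨c (r.succ,true), hmemTt r⟩))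
          ∘ (fun a (i : T) => X i a) := rfl
      rw [h1, h2]
      refine base.comp ?_ ?_
      · have hm0 : Measurable (fun v : (i : S) → ℝ =>
            (v ⟨c (0,false), hmemf⟩, v ⟨c (0,true), hmemt⟩)) :=
          (measurable_pi_apply _).prodMk (measurable_pi_apply _)
        exact hψm.comp hm0
      · apply Finset.measurable_prod
        intro r _
        have hm0 : Measurable (fun v : (i : T) → ℝ =>
            (v ⟨c (r.succ,false), hmemTf r⟩, v ⟨c (r.succ,true), hmemTt r⟩)) :=
          (measurable_pi_apply _).prodMk (measurable_pi_apply _)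
        exact hψm.comp hm0
    have hmF₁ : Measurable F₁ := by
      have hm0 : Measurable (fun ω => (X (c (0,false)) ω, X (c (0,true)) ω)) :=
        (hmeas _).prodMk (hmeas _)
      exact hψm.comp hm0
    have hmF₂ : Measurable F₂ := by
      apply Finset.measurable_prod
      intro r _
      have hm0 : Measurable (fun ω => (X (c (r.succ,false)) ω, X (c (r.succ,true)) ω)) :=
        (hmeas _).prodMk (hmeas _)
      exact hψm.comp hm0
    have hiF₁ : Integrable F₁ ℙ := by
      refine Integrable.mono' (integrable_const C) hmF₁.aestronglyMeasurable ?_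
      exact Filter.Eventually.of_forall (fun ω => by simpa using hbd _ _)
    have hiF₂ : Integrable F₂ ℙ := by
      refine Integrable.mono' (integrable_const (C ^ m)) hmF₂.aestronglyMeasurable ?_
      refine Filter.Eventually.of_forall (fun ω => ?_)
      calc ‖F₂ ω‖
          ≤ ∏ r : Fin m, ‖ψ (X (c (r.succ,false)) ω) (X (c (r.succ,true)) ω)‖ := norm_prod_le _ _
        _ ≤ ∏ _r : Fin m, C := Finset.prod_le_prod (fun _ _ => norm_nonneg _)
            (fun r _ => by simpa using hbd _ _)
        _ = C ^ m := by simp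
    have hsplit : ∀ ω, (∏ r : Fin (m+1), ψ (X (c (r, false)) ω) (X (c (r, true)) ω))
        = F₁ ω * F₂ ω := fun ω => Fin.prod_univ_succ _
    have key : ∫ ω, F₁ ω * F₂ ω ∂ℙ = (∫ ω, F₁ ω ∂ℙ) * ∫ ω, F₂ ω ∂ℙ := by
      have h := hind.integral_mul_eq_mul_integral hiF₁.aestronglyMeasurable hiF₂.aestronglyMeasurable
      simpa [Pi.mul_apply] using h
    have hc' : Function.Injective (fun p : Fin m × Bool => c (p.1.succ, p.2)) := by
      intro p p' h
      have h0 := hc h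
      have h1 := congrArg Prod.fst h0
      have h2 := congrArg Prod.snd h0
      simp only [] at h1 h2
      exact Prod.ext_iff.mpr ⟨Fin.succ_injective _ h1, h2⟩
    have hIH := IH (fun p : Fin m × Bool => c (p.1.succ, p.2)) hc' ψ hψm C hbd
    calc ∫ ω, ∏ r : Fin (m+1), ψ (X (c (r, false)) ω) (X (c (r, true)) ω) ∂ℙ
        = ∫ ω, F₁ ω * F₂ ω ∂ℙ :=
          integral_congr_ae (Filter.Eventually.of_forall (fun ω => hsplit ω))
      _ = (∫ ω, F₁ ω ∂ℙ) * ∫ ω, F₂ ω ∂ℙ := key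
      _ = ∏ r : Fin (m+1), ∫ ω, ψ (X (c (r, false)) ω) (X (c (r, true)) ω) ∂ℙ := by
          rw [Fin.prod_univ_succ, ← hIH]

end HLthm3


namespace HLthm4

variable {Ω : Type*} [MeasureSpace Ω] [IsProbabilityMeasure (ℙ : Measure Ω)]
    {n : ℕ} {X : Fin n → Ω → ℝ}

set_option maxHeartbeats 1600000 in
lemma core (hn : 2 ≤ n) (hmeas : ∀ i, Measurable (X i))
    (hindep : iIndepFun X ℙ)
    (φ : ℝ → ℝ → ℝ) (hφm : Measurable fun p : ℝ × ℝ => φ p.1 p.2)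
    (hφ01 : ∀ x y, φ x y = 0 ∨ φ x y = 1)
    (q a : ℝ) (hq : ∀ i j : Fin n, i ≠ j → ∫ ω, φ (X i ω) (X j ω) ∂ℙ = q)
    (ha : 0 < a) (hqa : q ≤ 1/2 - a) :
    (ℙ {ω | 1/2 ≤ (1 / ((n:ℝ) * ((n:ℝ)-1))) * ∑ i : Fin n, ∑ j : Fin n,
        (if i ≠ j then φ (X i ω) (X j ω) else 0)}).toReal
      ≤ Real.sqrt (1 - 4*a^2) ^ (n/2) := by
  have hφ0 : ∀ x y, 0 ≤ φ x y := fun x y => by rcases hφ01 x y with h | h <;> rw [h] <;> norm_num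
  have hφ1 : ∀ x y, φ x y ≤ 1 := fun x y => by rcases hφ01 x y with h | h <;> rw [h] <;> norm_num
  have hN : (0:ℝ) < (n:ℝ) * ((n:ℝ) - 1) := by
    have h2 : (2:ℝ) ≤ (n:ℝ) := by exact_mod_cast hn
    nlinarith
  have hone : (⟨0, by omega⟩ : Fin n) ≠ (⟨1, by omega⟩ : Fin n) := by
    intro h
    have h2 : (0:ℕ) = 1 := congrArg Fin.val h
    omega
  have hpairm : ∀ i j : Fin n, Measurable (fun ω => φ (X i ω) (X j ω)) := by
    intro i j
    have hm0 : Measurable (fun ω => (X i ω, X j ω)) := (hmeas i).prodMk (hmeas j)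
    exact hφm.comp hm0
  have hpairint : ∀ i j : Fin n, Integrable (fun ω => φ (X i ω) (X j ω)) ℙ := by
    intro i j
    refine Integrable.mono' (integrable_const 1) (hpairm i j).aestronglyMeasurable ?_
    exact Filter.Eventually.of_forall fun ω => by
      rw [Real.norm_eq_abs, abs_of_nonneg (hφ0 _ _)]; exact hφ1 _ _
  have hq0 : 0 ≤ q := by
    rw [← hq _ _ hone]
    exact integral_nonneg (fun ω => hφ0 _ _)
  have hahalf : a ≤ 1/2 := by linarith
  have hrhs0 : 0 ≤ Real.sqrt (1 - 4*a^2) ^ (n/2) := by positivity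
  -- W : the U-statistic
  set W : Ω → ℝ := fun ω => (1 / ((n:ℝ) * ((n:ℝ)-1))) * ∑ i : Fin n, ∑ j : Fin n,
      (if i ≠ j then φ (X i ω) (X j ω) else 0) with hW
  have hWm : Measurable W := by
    apply Measurable.const_mul
    apply Finset.measurable_sum
    intro i _
    apply Finset.measurable_sum
    intro j _
    by_cases hij : i ≠ j
    · simpa [hij] using hpairm i j
    · simp [hij]
  have hsum_le : ∀ ω, (∑ i : Fin n, ∑ j : Fin n, (if i ≠ j then φ (X i ω) (X j ω) else 0))
      ≤ (n:ℝ) * ((n:ℝ)-1) := by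
    intro ω
    rw [← HLthm.sum_offdiag_one (n := n)]
    refine Finset.sum_le_sum fun i _ => Finset.sum_le_sum fun j _ => ?_
    by_cases hij : i ≠ j <;> simp [hij, hφ1]
  have hsum_nonneg : ∀ ω, 0 ≤ ∑ i : Fin n, ∑ j : Fin n,
      (if i ≠ j then φ (X i ω) (X j ω) else 0) := by
    intro ω
    refine Finset.sum_nonneg fun i _ => Finset.sum_nonneg fun j _ => ?_
    by_cases hij : i ≠ j <;> simp [hij, hφ0]
  have hW01 : ∀ ω, 0 ≤ W ω ∧ W ω ≤ 1 := by
    intro ω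
    constructor
    · exact mul_nonneg (by positivity) (hsum_nonneg ω)
    · rw [hW]
      calc (1 / ((n:ℝ) * ((n:ℝ)-1))) * ∑ i : Fin n, ∑ j : Fin n,
            (if i ≠ j then φ (X i ω) (X j ω) else 0)
          ≤ (1 / ((n:ℝ) * ((n:ℝ)-1))) * ((n:ℝ) * ((n:ℝ)-1)) := by
            exact mul_le_mul_of_nonneg_left (hsum_le ω) (by positivity)
        _ = 1 := one_div_mul_cancel hN.ne'
  -- main case split on q
  rcases eq_or_lt_of_le hq0 with hq0' | hqpos
  · -- q = 0 : event is null
    have hzero : ∀ i j : Fin n, i ≠ j → (∀ᵐ ω ∂(ℙ : Measure Ω), φ (X i ω) (X j ω) = 0) := by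
      intro i j hij
      have hint := hq i j hij
      rw [← hq0'] at hint
      have := (integral_eq_zero_iff_of_nonneg (fun ω => hφ0 _ _) (hpairint i j)).mp hint
      filter_upwards [this] with ω hω using hω
    have hall : ∀ᵐ ω ∂(ℙ : Measure Ω), ∀ i j : Fin n, i ≠ j → φ (X i ω) (X j ω) = 0 := by
      rw [ae_all_iff]
      intro i
      rw [ae_all_iff]
      intro j
      by_cases hij : i ≠ j
      · filter_upwards [hzero i j hij] with ω hω using fun _ => hω
      · filter_upwards with ω hω using absurd hω hij
    have hnull : ℙ {ω | 1/2 ≤ W ω} = 0 := by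
      refine measure_mono_null ?_ (ae_iff.mp hall)
      intro ω hω hgood
      have hWz : W ω = 0 := by
        have hz : (∑ i : Fin n, ∑ j : Fin n, (if i ≠ j then φ (X i ω) (X j ω) else 0)) = 0 := by
          refine Finset.sum_eq_zero fun i _ => Finset.sum_eq_zero fun j _ => ?_
          by_cases hij : i ≠ j <;> simp [hij, hgood i j]
        show (1 / ((n:ℝ) * ((n:ℝ)-1))) * _ = 0
        rw [hz, mul_zero]
      rw [Set.mem_setOf_eq, hWz] at hω
      norm_num at hω
    rw [hnull]
    simpa using hrhs0
  · -- q > 0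
    have hq2 : q < 1/2 := by linarith
    set s : ℝ := Real.log ((1 - q)/q) with hs
    have hfrac1 : 1 < (1 - q)/q := by
      rw [lt_div_iff₀ hqpos]; linarith
    have hspos : 0 < s := Real.log_pos hfrac1
    have hexps : Real.exp s = (1 - q)/q := Real.exp_log (by linarith)
    set M : ℝ := 1 + (Real.exp s - 1) * q with hM
    have hMval : M = 2 * (1 - q) := by
      rw [hM, hexps]
      field_simp
      ring
    set k : ℕ := n / 2 with hk
    have hk1 : 1 ≤ k := by omega
    have hkR : (0:ℝ) < (k:ℝ) := by exact_mod_cast hk1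
    set lam : ℝ := (k:ℝ) * s with hlam
    have hlam0 : 0 ≤ lam := le_of_lt (mul_pos hkR hspos)
    -- blocks
    set B : Equiv.Perm (Fin n) → Ω → ℝ := fun σ ω => ((k:ℕ):ℝ)⁻¹ *
      ∑ r : Fin k, φ (X (σ ⟨2*r.1, by have := r.2; omega⟩) ω)
        (X (σ ⟨2*r.1+1, by have := r.2; omega⟩) ω) with hB
    have hBm : ∀ σ, Measurable (B σ) := by
      intro σ
      apply Measurable.const_mul
      exact Finset.measurable_sum _ fun r _ => hpairm _ _
    have hB01 : ∀ σ ω, 0 ≤ B σ ω ∧ B σ ω ≤ 1 := by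
      intro σ ω
      constructor
      · refine mul_nonneg (by positivity) (Finset.sum_nonneg fun r _ => hφ0 _ _)
      · rw [hB]
        have hsle : (∑ r : Fin k, φ (X (σ ⟨2*r.1, by have := r.2; omega⟩) ω)
            (X (σ ⟨2*r.1+1, by have := r.2; omega⟩) ω)) ≤ (k:ℝ) := by
          calc _ ≤ ∑ _r : Fin k, (1:ℝ) := Finset.sum_le_sum fun r _ => hφ1 _ _
            _ = (k:ℝ) := by simp
        calc ((k:ℕ):ℝ)⁻¹ * _ ≤ ((k:ℕ):ℝ)⁻¹ * (k:ℝ) :=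
              mul_le_mul_of_nonneg_left hsle (by positivity)
          _ = 1 := by field_simp
    -- decomposition identity
    have hdec : ∀ ω, W ω = ∑ σ : Equiv.Perm (Fin n), ((Nat.factorial n : ℝ))⁻¹ * B σ ω := by
      intro ω
      have h0 := HLthm2.decomp hn (fun i j => if i ≠ j then φ (X i ω) (X j ω) else 0)
        (fun i => by simp)
      have h1 : W ω = 1 / ((n:ℝ)*((n:ℝ)-1)) * ∑ i : Fin n, ∑ j : Fin n,
          (fun i j => if i ≠ j then φ (X i ω) (X j ω) else 0) i j := rfl
      rw [h1, h0]
      refine Finset.sum_congr rfl fun σ _ => ?_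
      congr 1
      congr 1
      refine Finset.sum_congr rfl fun r _ => ?_
      have hne : σ ⟨2*r.1, by have := r.2; omega⟩ ≠ σ ⟨2*r.1+1, by have := r.2; omega⟩ := by
        intro h
        have h2 := σ.injective h
        have h3 : 2*r.1 = 2*r.1+1 := congrArg Fin.val h2
        omega
      exact if_pos hne
    -- Jensen pointwise
    have hfac0 : (0:ℝ) < (Nat.factorial n : ℝ) := by exact_mod_cast Nat.factorial_pos n
    have hwsum : (∑ _σ : Equiv.Perm (Fin n), ((Nat.factorial n : ℝ))⁻¹) = 1 := by
      rw [Finset.sum_const, Finset.card_univ, Fintype.card_perm, Fintype.card_fin, nsmul_eq_mul]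
      field_simp
    have hjensen : ∀ ω, Real.exp (lam * W ω)
        ≤ ∑ σ : Equiv.Perm (Fin n), ((Nat.factorial n : ℝ))⁻¹ * Real.exp (lam * B σ ω) := by
      intro ω
      have harg : lam * W ω = ∑ σ : Equiv.Perm (Fin n),
          ((Nat.factorial n : ℝ))⁻¹ • (lam * B σ ω) := by
        rw [hdec ω, Finset.mul_sum]
        refine Finset.sum_congr rfl fun σ _ => ?_
        rw [smul_eq_mul]
        ring
      have := convexOn_exp.map_sum_le (t := (univ : Finset (Equiv.Perm (Fin n))))
        (w := fun _ => ((Nat.factorial n : ℝ))⁻¹) (p := fun σ => lam * B σ ω)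
        (fun _ _ => by positivity) hwsum (fun _ _ => Set.mem_univ _)
      rw [harg]
      refine le_trans this ?_
      refine le_of_eq (Finset.sum_congr rfl fun σ _ => ?_)
      rw [smul_eq_mul]
    -- integrability facts
    have hintexpW : Integrable (fun ω => Real.exp (lam * W ω)) ℙ := by
      refine Integrable.mono' (integrable_const (Real.exp lam))
        ((hWm.const_mul lam).exp.aestronglyMeasurable) ?_
      refine Filter.Eventually.of_forall fun ω => ?_
      rw [Real.norm_eq_abs, abs_of_pos (Real.exp_pos _)]
      exact Real.exp_le_exp.mpr (by nlinarith [(hW01 ω).1, (hW01 ω).2])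
    have hintexpB : ∀ σ, Integrable (fun ω => Real.exp (lam * B σ ω)) ℙ := by
      intro σ
      refine Integrable.mono' (integrable_const (Real.exp lam))
        (((hBm σ).const_mul lam).exp.aestronglyMeasurable) ?_
      refine Filter.Eventually.of_forall fun ω => ?_
      rw [Real.norm_eq_abs, abs_of_pos (Real.exp_pos _)]
      exact Real.exp_le_exp.mpr (by nlinarith [(hB01 σ ω).1, (hB01 σ ω).2])
    -- block integral
    have hψm' : Measurable (fun p : ℝ × ℝ => Real.exp (s * φ p.1 p.2)) :=
      (hφm.const_mul s).exp
    have hψbd : ∀ x y, |Real.exp (s * φ x y)| ≤ Real.exp s := by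
      intro x y
      rw [abs_of_pos (Real.exp_pos _)]
      apply Real.exp_le_exp.mpr
      nlinarith [hφ0 x y, hφ1 x y]
    have hblock : ∀ σ : Equiv.Perm (Fin n),
        ∫ ω, Real.exp (lam * B σ ω) ∂ℙ = M ^ k := by
      intro σ
      have hptwise : ∀ ω, Real.exp (lam * B σ ω)
          = ∏ r : Fin k, Real.exp (s * φ (X (σ ⟨2*r.1, by have := r.2; omega⟩) ω)
              (X (σ ⟨2*r.1+1, by have := r.2; omega⟩) ω)) := by
        intro ω
        rw [← Real.exp_sum]
        congr 1
        rw [hB, hlam, ← Finset.mul_sum]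
        field_simp
      set c : Fin k × Bool → Fin n := fun p =>
        σ ⟨2*p.1.1 + p.2.toNat, by
          have h1 := p.1.2
          have h2 : p.2.toNat ≤ 1 := Bool.toNat_le p.2
          omega⟩ with hc
      have hcf : ∀ r : Fin k, c (r, false) = σ ⟨2*r.1, by have := r.2; omega⟩ := by
        intro r
        rw [hc]
        exact congrArg σ (Fin.ext (by simp))
      have hct : ∀ r : Fin k, c (r, true) = σ ⟨2*r.1+1, by have := r.2; omega⟩ := by
        intro r
        rw [hc]
        exact congrArg σ (Fin.ext (by simp))
      have hcinj : Function.Injective c := by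
        intro p p' hpp
        rw [hc] at hpp
        have h3 : 2*p.1.1 + p.2.toNat = 2*p'.1.1 + p'.2.toNat :=
          congrArg Fin.val (σ.injective hpp)
        obtain ⟨u, b⟩ := p
        obtain ⟨u', b'⟩ := p'
        simp only at h3
        rcases b <;> rcases b' <;>
          simp only [Bool.toNat_false, Bool.toNat_true] at h3
        · have huu : u = u' := Fin.ext (by omega)
          rw [huu]
        · exact absurd h3 (by omega)
        · exact absurd h3 (by omega)
        · have huu : u = u' := Fin.ext (by omega)
          rw [huu]
      have hp2 := HLthm3.prod_pair_integral hmeas hindep k c hcinj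
        (fun x y => Real.exp (s * φ x y)) hψm' (Real.exp s) hψbd
      have hrw : (fun ω => Real.exp (lam * B σ ω))
          = fun ω => ∏ r : Fin k, Real.exp
              (s * φ (X (c (r,false)) ω) (X (c (r,true)) ω)) := by
        funext ω
        rw [hptwise ω]
        refine Finset.prod_congr rfl fun r _ => ?_
        rw [hcf r, hct r]
      rw [hrw, hp2]
      have hfactor : ∀ r : Fin k,
          ∫ ω, Real.exp (s * φ (X (c (r,false)) ω) (X (c (r,true)) ω)) ∂ℙ = M := by
        intro r
        have hij : c (r,false) ≠ c (r,true) := by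
          intro h
          have h2 := hcinj h
          exact Bool.false_ne_true (congrArg Prod.snd h2)
        have hpt : ∀ ω, Real.exp (s * φ (X (c (r,false)) ω) (X (c (r,true)) ω))
            = 1 + (Real.exp s - 1) * φ (X (c (r,false)) ω) (X (c (r,true)) ω) := by
          intro ω
          rcases hφ01 (X (c (r,false)) ω) (X (c (r,true)) ω) with h | h <;> rw [h] <;> simp
        rw [integral_congr_ae (Filter.Eventually.of_forall hpt),
          integral_add (integrable_const 1) ((hpairint _ _).const_mul _),
          integral_const_mul, hq _ _ hij]
        simp [hM]
      rw [Finset.prod_congr rfl (fun r _ => hfactor r), Finset.prod_const,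
        Finset.card_univ, Fintype.card_fin]
    -- Chernoff
    have hcher := measure_ge_le_exp_mul_mgf (μ := ℙ) (X := W) (t := lam) (1/2) hlam0 hintexpW
    have hmgf : mgf W ℙ lam ≤ M ^ k := by
      have hmgfdef : mgf W ℙ lam = ∫ ω, Real.exp (lam * W ω) ∂ℙ := rfl
      rw [hmgfdef]
      calc ∫ ω, Real.exp (lam * W ω) ∂ℙ
          ≤ ∫ ω, (∑ σ : Equiv.Perm (Fin n),
              ((Nat.factorial n:ℝ))⁻¹ * Real.exp (lam * B σ ω)) ∂ℙ := by
            refine integral_mono hintexpW ?_ hjensen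
            exact integrable_finset_sum _ fun σ _ => ((hintexpB σ).const_mul _)
        _ = ∑ σ : Equiv.Perm (Fin n),
              ((Nat.factorial n:ℝ))⁻¹ * ∫ ω, Real.exp (lam * B σ ω) ∂ℙ := by
            rw [integral_finset_sum _ fun σ _ => ((hintexpB σ).const_mul _)]
            exact Finset.sum_congr rfl fun σ _ => integral_const_mul _ _
        _ = ∑ _σ : Equiv.Perm (Fin n), ((Nat.factorial n:ℝ))⁻¹ * M ^ k :=
            Finset.sum_congr rfl fun σ _ => by rw [hblock σ]
        _ = M ^ k := by
            rw [← Finset.sum_mul, hwsum, one_mul]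
    have hMpos : 0 < M := by rw [hMval]; linarith
    have hL0 : 0 ≤ Real.exp (-s/2) * M := by positivity
    have hkey : Real.exp (-lam * (1/2)) * M ^ k = (Real.exp (-s/2) * M) ^ k := by
      rw [mul_pow, ← Real.exp_nat_mul]
      congr 1
      rw [hlam]
      ring
    have hfinal : Real.exp (-s/2) * M ≤ Real.sqrt (1 - 4*a^2) := by
      have h1q : (0:ℝ) < 1 - q := by linarith
      have hsq : (Real.exp (-s/2) * M)^2 = 4 * q * (1-q) := by
        have he2 : (Real.exp (-s/2))^2 = Real.exp (-s) := by
          rw [← Real.exp_nat_mul]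
          congr 1
          ring
        have hem : Real.exp (-s) = q / (1-q) := by
          rw [Real.exp_neg, hexps]
          field_simp
        rw [mul_pow, he2, hem, hMval]
        field_simp
        ring
      have h2 : (Real.exp (-s/2) * M)^2 ≤ 1 - 4*a^2 := by
        rw [hsq]
        nlinarith
      have h40 : (0:ℝ) ≤ 1 - 4*a^2 := le_trans (by positivity) h2
      exact (Real.le_sqrt hL0 h40).mpr h2
    calc (ℙ {ω | 1/2 ≤ W ω}).toReal
        ≤ Real.exp (-lam * (1/2)) * mgf W ℙ lam := hcher
      _ ≤ Real.exp (-lam * (1/2)) * M ^ k :=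
          mul_le_mul_of_nonneg_left hmgf (Real.exp_pos _).le
      _ = (Real.exp (-s/2) * M) ^ k := hkey
      _ ≤ Real.sqrt (1 - 4*a^2) ^ k := pow_le_pow_left₀ hL0 hfinal k

end HLthm4


namespace HLthm5

set_option maxHeartbeats 2000000 in
lemma final_arith {nn kk : ℕ} (hn : 2 ≤ nn) (hkk : kk = nn / 2) {aa : ℝ} (ha : 0 < aa)
    (hbig : Real.log 2 < (nn:ℝ) * aa^2) :
    Real.sqrt (1 - 4*aa^2) ^ kk ≤ Real.exp (-((nn:ℝ) * aa^2)) := by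
  have hkk1 : 1 ≤ kk := by omega
  by_cases h40 : 1 - 4*aa^2 ≤ 0
  · rw [Real.sqrt_eq_zero'.mpr (by linarith), zero_pow (by omega)]
    exact (Real.exp_pos _).le
  · push_neg at h40
    set x : ℝ := 4*aa^2 with hx
    have hx0 : 0 < x := by positivity
    have hx1 : x < 1 := by linarith
    have hsqrt : Real.sqrt (1-x) ^ kk = Real.exp ((kk:ℝ) * (Real.log (1-x) / 2)) := by
      rw [← Real.log_sqrt (by linarith : (0:ℝ) ≤ 1 - x), Real.exp_nat_mul,
        Real.exp_log (Real.sqrt_pos.mpr (by linarith))]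
    rw [hsqrt]
    apply Real.exp_le_exp.mpr
    have hlog := HLthm.log_one_sub_le hx0.le hx1
    have hnx : (nn:ℝ)*aa^2 = (nn:ℝ)*x/4 := by rw [hx]; ring
    rw [hnx]
    have hbigx : Real.log 2 < (nn:ℝ)*x/4 := by rw [← hnx]; exact hbig
    have hlog2 : (0.6931471803:ℝ) < Real.log 2 := Real.log_two_gt_d9
    have hkey : (nn:ℝ) * x ≤ 2*(kk:ℝ)*(x + x^2/2 + x^3/3) := by
      rcases Nat.even_or_odd nn with ⟨l, hl⟩ | ⟨l, hl⟩
      · have hkl : kk = l := by omega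
        have hcast : (nn:ℝ) = 2*(l:ℝ) := by rw [hl]; push_cast; ring
        have hl0 : (0:ℝ) ≤ (l:ℝ) := Nat.cast_nonneg l
        rw [hkl, hcast]
        nlinarith [mul_nonneg hl0 (by positivity : (0:ℝ) ≤ x^2),
          mul_nonneg hl0 (by positivity : (0:ℝ) ≤ x^3)]
      · have hkl : kk = l := by omega
        have hl1 : 1 ≤ l := by omega
        have hcast : (nn:ℝ) = 2*(l:ℝ)+1 := by rw [hl]; push_cast; ring
        have hbig' : (2.7725887212:ℝ) < (2*(l:ℝ)+1) * x := by
          have h1 : Real.log 2 < (2*(l:ℝ)+1)*x/4 := by rw [← hcast]; exact hbigx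
          nlinarith
        rw [hkl, hcast]
        rcases eq_or_lt_of_le hl1 with hl2 | hl2
        · have hleq : (l:ℝ) = 1 := by exact_mod_cast congrArg Nat.cast hl2.symm
          rw [hleq] at hbig' ⊢
          nlinarith [sq_nonneg x, sq_nonneg (x-1), mul_pos hx0 hx0]
        · have hl2' : (2:ℝ) ≤ (l:ℝ) := by exact_mod_cast hl2
          have hlx : 1 < (l:ℝ)*x := by nlinarith [mul_nonneg (by linarith : (0:ℝ) ≤ (l:ℝ)-2) hx0.le]
          nlinarith [mul_pos (sub_pos.mpr hlx) hx0, mul_nonneg (by linarith : (0:ℝ) ≤ (l:ℝ)*x) (by positivity : (0:ℝ) ≤ x^2)]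
    have hkk0 : (0:ℝ) ≤ (kk:ℝ) := Nat.cast_nonneg kk
    nlinarith [mul_le_mul_of_nonneg_left hlog hkk0]

end HLthm5

set_option maxHeartbeats 1600000 in
/-- Sub-Gaussian deviation bound for the one-sample Hodges–Lehmann estimator. -/
theorem stmt2
    {Ω : Type*} [MeasureSpace Ω] [IsProbabilityMeasure (ℙ : Measure Ω)]
    {n : ℕ} (hn : 2 ≤ n) (X : Fin n → Ω → ℝ)
    (hmeas : ∀ i, Measurable (X i))
    (hindep : iIndepFun X ℙ)
    (hident : ∀ i j, IdentDistrib (X i) (X j) ℙ ℙ)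
    (U : ℝ → ℝ)
    (hU : ∀ t, U t = (ℙ {ω | (X ⟨0, by omega⟩ ω + X ⟨1, by omega⟩ ω) / 2 ≤ t}).toReal)
    (θ : ℝ) (hθ : θ = sInf {t : ℝ | U t ≥ 1/2})
    (c₀ κ₀ : ℝ) (hc₀ : 0 < c₀) (hκ₀ : 0 < κ₀)
    (U' : ℝ → ℝ)
    (hderiv : ∀ δ : ℝ, |δ| ≤ c₀ → HasDerivAt U (U' (θ + δ)) (θ + δ))
    (hlb : ∀ δ : ℝ, |δ| ≤ c₀ → κ₀ ≤ U' (θ + δ))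
    (Un : Ω → ℝ → ℝ)
    (hUn : ∀ ω t, Un ω t = (1 / ((n : ℝ) * ((n : ℝ) - 1))) *
      ∑ i : Fin n, ∑ j : Fin n,
        if i ≠ j then (if (X i ω + X j ω) / 2 ≤ t then (1 : ℝ) else 0) else 0)
    (θhat : Ω → ℝ) (hθhat : ∀ ω, θhat ω = sInf {t : ℝ | Un ω t ≥ 1/2})
    (z : ℝ) (hz : 0 < z) :
    (ℙ {ω | |θhat ω - θ| > z}).toReal ≤
      2 * Real.exp (-(n : ℝ) * κ₀ ^ 2 * (min z c₀) ^ 2) := by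
  classical
  set m : ℝ := min z c₀ with hm
  have hm0 : 0 < m := lt_min hz hc₀
  have hmz : m ≤ z := min_le_left _ _
  have hmc : m ≤ c₀ := min_le_right _ _
  set a : ℝ := κ₀ * m with ha
  have ha0 : 0 < a := mul_pos hκ₀ hm0
  have hexp_eq : -(n : ℝ) * κ₀ ^ 2 * m ^ 2 = -((n:ℝ) * a^2) := by rw [ha]; ring
  -- trivial case
  by_cases hcase : (n:ℝ) * a^2 ≤ Real.log 2
  · have h1 : (ℙ {ω | |θhat ω - θ| > z}).toReal ≤ 1 := by
      have hh := prob_le_one (μ := ℙ) (s := {ω | |θhat ω - θ| > z})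
      simpa using ENNReal.toReal_mono (by simp) hh
    have h2 : (1:ℝ) ≤ 2 * Real.exp (-(n : ℝ) * κ₀ ^ 2 * m ^ 2) := by
      rw [hexp_eq]
      have : Real.exp (-Real.log 2) ≤ Real.exp (-((n:ℝ) * a^2)) :=
        Real.exp_le_exp.mpr (by linarith)
      have h3 : Real.exp (-Real.log 2) = 1/2 := by
        rw [Real.exp_neg, Real.exp_log (by norm_num : (0:ℝ) < 2)]
        norm_num
      linarith
    linarith
  -- main case
  push_neg at hcase
  -- CDF facts
  set Y : Ω → ℝ := fun ω => (X ⟨0, by omega⟩ ω + X ⟨1, by omega⟩ ω) / 2 with hY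
  have hYm : Measurable Y := (((hmeas _).add (hmeas _)).div_const 2)
  set μY : Measure ℝ := Measure.map Y ℙ with hμY
  have : IsProbabilityMeasure μY := Measure.isProbabilityMeasure_map hYm.aemeasurable
  have hcdf : ∀ t, U t = cdf μY t := by
    intro t
    rw [hU t, cdf_eq_real, measureReal_def, hμY, Measure.map_apply hYm measurableSet_Iic]
    rfl
  have hUmono : Monotone U := by
    intro t t' h
    rw [hcdf, hcdf]
    exact monotone_cdf μY h
  have hU01 : ∀ t, 0 ≤ U t ∧ U t ≤ 1 := fun t => by
    rw [hcdf]; exact ⟨cdf_nonneg μY t, cdf_le_one μY t⟩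
  set SU : Set ℝ := {t : ℝ | U t ≥ 1/2} with hSU
  have hSUne : SU.Nonempty := by
    have h1 : Filter.Tendsto U Filter.atTop (nhds 1) := by
      have := tendsto_cdf_atTop (μ := μY)
      refine this.congr fun t => (hcdf t).symm
    have h2 : ∀ᶠ t in Filter.atTop, 1/2 ≤ U t :=
      h1.eventually_const_le (by norm_num)
    obtain ⟨t₀, ht₀⟩ := h2.exists
    exact ⟨t₀, ht₀⟩
  have hSUbdd : BddBelow SU := by
    have h1 : Filter.Tendsto U Filter.atBot (nhds 0) := by
      have := tendsto_cdf_atBot (μ := μY)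
      refine this.congr fun t => (hcdf t).symm
    have h2 : ∀ᶠ t in Filter.atBot, U t ≤ 1/4 :=
      h1.eventually_le_const (by norm_num)
    obtain ⟨t₁, ht₁⟩ := h2.exists
    refine ⟨t₁, fun u hu => ?_⟩
    by_contra hc
    push_neg at hc
    have := hUmono hc.le
    have hu' : (1:ℝ)/2 ≤ U u := hu
    linarith
  have hθinf : θ = sInf SU := hθ
  have hUcont : ∀ x ∈ Set.Icc (θ - c₀) (θ + c₀), ContinuousAt U x := by
    intro x hx
    have hδ : |x - θ| ≤ c₀ := abs_le.mpr ⟨by linarith [hx.1], by linarith [hx.2]⟩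
    have h := (hderiv (x - θ) hδ).continuousAt
    have hxx : θ + (x - θ) = x := by ring
    rwa [hxx] at h
  -- U θ = 1/2
  have hUθ : U θ = 1/2 := by
    have hcθ : ContinuousAt U θ :=
      hUcont θ (Set.mem_Icc.mpr ⟨by linarith, by linarith⟩)
    have hge : 1/2 ≤ U θ := by
      by_contra hcon
      push_neg at hcon
      have hev : ∀ᶠ y in nhds θ, U y < 1/2 := hcθ.eventually_lt_const hcon
      obtain ⟨ε, hε0, hball⟩ := Metric.eventually_nhds_iff.mp hev
      obtain ⟨u, huSU, hult⟩ := exists_lt_of_csInf_lt hSUne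
        (show sInf SU < θ + ε by rw [← hθinf]; linarith)
      have hθu : θ ≤ u := hθinf ▸ csInf_le hSUbdd huSU
      have hdist : dist u θ < ε := by
        rw [Real.dist_eq, abs_of_nonneg (by linarith)]
        linarith
      have := hball hdist
      have hu' : (1:ℝ)/2 ≤ U u := huSU
      linarith
    have hle : U θ ≤ 1/2 := by
      by_contra hcon
      push_neg at hcon
      have hev : ∀ᶠ y in nhds θ, 1/2 < U y := hcθ.eventually_const_lt hcon
      obtain ⟨ε, hε0, hball⟩ := Metric.eventually_nhds_iff.mp hev
      have hmem : (θ - ε/2) ∈ SU := by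
        have : dist (θ - ε/2) θ < ε := by
          rw [Real.dist_eq, abs_of_nonpos (by linarith)]
          linarith
        exact le_of_lt (hball this)
      have := hθinf ▸ csInf_le hSUbdd hmem
      linarith
    linarith
  -- MVT bounds
  have hMVT : ∀ x y : ℝ, x ∈ Set.Icc (θ - c₀) (θ + c₀) → y ∈ Set.Icc (θ - c₀) (θ + c₀) →
      x ≤ y → κ₀ * (y - x) ≤ U y - U x := by
    intro x y hx hy hxy
    have hsub : Set.Icc x y ⊆ Set.Icc (θ - c₀) (θ + c₀) :=
      Set.Icc_subset_Icc hx.1 hy.2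
    refine Convex.mul_sub_le_image_sub_of_le_deriv (convex_Icc x y)
      (fun u hu => (hUcont u (hsub hu)).continuousWithinAt) ?_ ?_ x ?_ y ?_ hxy
    · intro u hu
      rw [interior_Icc] at hu
      have hu' := hsub (Set.mem_Icc.mpr ⟨hu.1.le, hu.2.le⟩)
      have hδ : |u - θ| ≤ c₀ := abs_le.mpr ⟨by linarith [hu'.1], by linarith [hu'.2]⟩
      have h := hderiv (u - θ) hδ
      have hxx : θ + (u - θ) = u := by ring
      rw [hxx] at h
      exact h.differentiableAt.differentiableWithinAt
    · intro u hu
      rw [interior_Icc] at hu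
      have hu' := hsub (Set.mem_Icc.mpr ⟨hu.1.le, hu.2.le⟩)
      have hδ : |u - θ| ≤ c₀ := abs_le.mpr ⟨by linarith [hu'.1], by linarith [hu'.2]⟩
      have h := hderiv (u - θ) hδ
      have hxx : θ + (u - θ) = u := by ring
      rw [hxx] at h
      rw [h.deriv]
      have := hlb (u - θ) hδ
      rwa [hxx] at this
    · exact Set.mem_Icc.mpr ⟨le_refl x, hxy⟩
    · exact Set.mem_Icc.mpr ⟨hxy, le_refl y⟩
  have hUp : 1/2 + a ≤ U (θ + m) := by
    have := hMVT θ (θ + m) (Set.mem_Icc.mpr ⟨by linarith, by linarith⟩)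
      (Set.mem_Icc.mpr ⟨by linarith, by linarith⟩) (by linarith)
    rw [hUθ] at this
    have harg : θ + m - θ = m := by ring
    rw [harg] at this
    rw [ha]
    linarith
  have hDn : U (θ - m) ≤ 1/2 - a := by
    have := hMVT (θ - m) θ (Set.mem_Icc.mpr ⟨by linarith, by linarith⟩)
      (Set.mem_Icc.mpr ⟨by linarith, by linarith⟩) (by linarith)
    rw [hUθ] at this
    have harg : θ - (θ - m) = m := by ring
    rw [harg] at this
    rw [ha]
    linarith
  -- the two one-sided kernels
  set N : ℝ := (n:ℝ) * ((n:ℝ) - 1) with hNdef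
  have hN : (0:ℝ) < N := by
    have h2 : (2:ℝ) ≤ (n:ℝ) := by exact_mod_cast hn
    rw [hNdef]; nlinarith
  set φdn : ℝ → ℝ → ℝ := fun x y => if (x+y)/2 ≤ θ - m then (1:ℝ) else 0 with hφdn
  set φup : ℝ → ℝ → ℝ := fun x y => if (x+y)/2 ≤ θ + m then (0:ℝ) else 1 with hφup
  have havgm : Measurable (fun p : ℝ × ℝ => (p.1 + p.2)/2) :=
    (measurable_fst.add measurable_snd).div_const 2
  have hφdnm : Measurable (fun p : ℝ × ℝ => φdn p.1 p.2) := by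
    rw [hφdn]
    exact Measurable.ite (measurableSet_le havgm measurable_const)
      measurable_const measurable_const
  have hφupm : Measurable (fun p : ℝ × ℝ => φup p.1 p.2) := by
    rw [hφup]
    exact Measurable.ite (measurableSet_le havgm measurable_const)
      measurable_const measurable_const
  have hφdn01 : ∀ x y, φdn x y = 0 ∨ φdn x y = 1 := by
    intro x y
    rw [hφdn]
    by_cases h : (x+y)/2 ≤ θ - m <;> simp [h]
  have hφup01 : ∀ x y, φup x y = 0 ∨ φup x y = 1 := by
    intro x y
    rw [hφup]
    by_cases h : (x+y)/2 ≤ θ + m <;> simp [h]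
  have hone : (⟨0, by omega⟩ : Fin n) ≠ (⟨1, by omega⟩ : Fin n) := by
    intro h
    have h2 : (0:ℕ) = 1 := congrArg Fin.val h
    omega
  -- indicator integral equals U
  have hindint : ∀ t : ℝ, ∫ ω, (if Y ω ≤ t then (1:ℝ) else 0) ∂ℙ = U t := by
    intro t
    have hs : MeasurableSet {ω | Y ω ≤ t} := measurableSet_le hYm measurable_const
    have heq : (fun ω => if Y ω ≤ t then (1:ℝ) else 0)
        = Set.indicator {ω | Y ω ≤ t} (fun _ => (1:ℝ)) := by
      funext ω
      simp [Set.indicator_apply, Set.mem_setOf_eq]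
    rw [heq, integral_indicator_const _ hs, hU t]
    simp only [smul_eq_mul, mul_one]
    rfl
  -- q-values for the two kernels
  have hqdn : ∀ i j : Fin n, i ≠ j → ∫ ω, φdn (X i ω) (X j ω) ∂ℙ = U (θ - m) := by
    intro i j hij
    rw [HLthm3.pair_integral_eq hmeas hindep hident hij hone φdn hφdnm]
    exact hindint (θ - m)
  have hindm : ∀ i j : Fin n, Measurable (fun ω => if (X i ω + X j ω)/2 ≤ θ + m then (1:ℝ) else 0) := by
    intro i j
    exact Measurable.ite
      (measurableSet_le (((hmeas i).add (hmeas j)).div_const 2) measurable_const)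
      measurable_const measurable_const
  have hqup : ∀ i j : Fin n, i ≠ j → ∫ ω, φup (X i ω) (X j ω) ∂ℙ = 1 - U (θ + m) := by
    intro i j hij
    rw [HLthm3.pair_integral_eq hmeas hindep hident hij hone φup hφupm]
    have hpt : ∀ ω, φup (X ⟨0, by omega⟩ ω) (X ⟨1, by omega⟩ ω)
        = 1 - (if Y ω ≤ θ + m then (1:ℝ) else 0) := by
      intro ω
      rw [hφup]
      by_cases h : Y ω ≤ θ + m
      · simp only [if_pos h]
        have h' : (X ⟨0, by omega⟩ ω + X ⟨1, by omega⟩ ω)/2 ≤ θ + m := h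
        simp [h']
      · simp only [if_neg h]
        have h' : ¬ (X ⟨0, by omega⟩ ω + X ⟨1, by omega⟩ ω)/2 ≤ θ + m := h
        simp [h']
    rw [integral_congr_ae (Filter.Eventually.of_forall hpt)]
    have hint1 : Integrable (fun ω => if Y ω ≤ θ + m then (1:ℝ) else 0) ℙ := by
      refine Integrable.mono' (integrable_const 1) ?_ ?_
      · exact (Measurable.ite (measurableSet_le hYm measurable_const)
          measurable_const measurable_const).aestronglyMeasurable
      · refine Filter.Eventually.of_forall fun ω => ?_
        by_cases h : Y ω ≤ θ + m <;> simp [h]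
    rw [integral_sub (integrable_const 1) hint1, hindint (θ + m)]
    simp
  -- apply the core bound
  have Pdn := HLthm4.core hn hmeas hindep φdn hφdnm hφdn01 (U (θ - m)) a hqdn ha0
    (by linarith [hDn])
  have Pup := HLthm4.core hn hmeas hindep φup hφupm hφup01 (1 - U (θ + m)) a hqup ha0
    (by linarith [hUp])
  -- event inclusion
  set Aup : Set Ω := {ω | 1/2 ≤ (1 / ((n:ℝ) * ((n:ℝ)-1))) * ∑ i : Fin n, ∑ j : Fin n,
      (if i ≠ j then φup (X i ω) (X j ω) else 0)} with hAup
  set Adn : Set Ω := {ω | 1/2 ≤ (1 / ((n:ℝ) * ((n:ℝ)-1))) * ∑ i : Fin n, ∑ j : Fin n,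
      (if i ≠ j then φdn (X i ω) (X j ω) else 0)} with hAdn
  have hsub : {ω | |θhat ω - θ| > z} ⊆ Aup ∪ Adn := by
    intro ω hω
    have hω' : z < |θhat ω - θ| := hω
    have hUnmono : ∀ t t' : ℝ, t ≤ t' → Un ω t ≤ Un ω t' := by
      intro t t' h
      rw [hUn ω t, hUn ω t']
      refine mul_le_mul_of_nonneg_left
        (Finset.sum_le_sum fun i _ => Finset.sum_le_sum fun j _ => ?_) (by positivity)
      by_cases hij : i ≠ j
      · rw [if_pos hij, if_pos hij]
        by_cases h1 : (X i ω + X j ω)/2 ≤ t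
        · rw [if_pos h1, if_pos (le_trans h1 h)]
        · rw [if_neg h1]
          by_cases h2 : (X i ω + X j ω)/2 ≤ t' <;> simp [h2]
      · rw [if_neg hij, if_neg hij]
    have hne : Nonempty (Fin n) := ⟨⟨0, by omega⟩⟩
    have huniv : (Finset.univ : Finset (Fin n)).Nonempty := Finset.univ_nonempty
    set R : ℝ := Finset.univ.sup' huniv (fun i => X i ω) with hR
    have hRle : ∀ i : Fin n, X i ω ≤ R := fun i => Finset.le_sup' (fun i => X i ω) (Finset.mem_univ i)
    set L : ℝ := Finset.univ.inf' huniv (fun i => X i ω) with hL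
    have hLle : ∀ i : Fin n, L ≤ X i ω := fun i => Finset.inf'_le (fun i => X i ω) (Finset.mem_univ i)
    set Sω : Set ℝ := {t : ℝ | Un ω t ≥ 1/2} with hSω
    have hSne : Sω.Nonempty := by
      refine ⟨R, ?_⟩
      show Un ω R ≥ 1/2
      rw [hUn ω R]
      have hall : (∑ i : Fin n, ∑ j : Fin n,
          (if i ≠ j then (if (X i ω + X j ω)/2 ≤ R then (1:ℝ) else 0) else 0))
          = ∑ i : Fin n, ∑ j : Fin n, (if i ≠ j then (1:ℝ) else 0) := by
        refine Finset.sum_congr rfl fun i _ => Finset.sum_congr rfl fun j _ => ?_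
        by_cases hij : i ≠ j
        · have hc : (X i ω + X j ω)/2 ≤ R := by
            have := hRle i; have := hRle j; linarith
          simp [hij, hc]
        · simp [hij]
      rw [hall, HLthm.sum_offdiag_one]
      rw [ge_iff_le]
      have : 1 / N * N = 1 := by field_simp
      rw [this]
      norm_num
    have hSbdd : BddBelow Sω := by
      refine ⟨L, fun u hu => ?_⟩
      by_contra hc
      push_neg at hc
      have hz0 : Un ω u = 0 := by
        rw [hUn ω u]
        have hzero : (∑ i : Fin n, ∑ j : Fin n,
            (if i ≠ j then (if (X i ω + X j ω)/2 ≤ u then (1:ℝ) else 0) else 0)) = 0 := by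
          refine Finset.sum_eq_zero fun i _ => Finset.sum_eq_zero fun j _ => ?_
          have hnc : ¬ (X i ω + X j ω)/2 ≤ u := by
            have := hLle i; have := hLle j
            push_neg
            linarith
          by_cases hij : i ≠ j <;> simp [hij, hnc]
        rw [hzero, mul_zero]
      have hu' : (1:ℝ)/2 ≤ Un ω u := hu
      rw [hz0] at hu'
      norm_num at hu'
    rcases lt_abs.mp hω' with h1 | h1
    · -- upper deviation
      left
      have hnotmem : (θ + m) ∉ Sω := by
        intro hmem
        have hle := csInf_le hSbdd hmem
        rw [← hθhat ω] at hle
        linarith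
      have hUnlt : Un ω (θ + m) < 1/2 := by
        by_contra hcc
        push_neg at hcc
        exact hnotmem hcc
      show 1/2 ≤ (1 / ((n:ℝ) * ((n:ℝ)-1))) * ∑ i : Fin n, ∑ j : Fin n,
          (if i ≠ j then φup (X i ω) (X j ω) else 0)
      have hid : (∑ i : Fin n, ∑ j : Fin n, (if i ≠ j then φup (X i ω) (X j ω) else 0))
          = ∑ i : Fin n, ∑ j : Fin n, ((if i ≠ j then (1:ℝ) else 0)
            - (if i ≠ j then (if (X i ω + X j ω)/2 ≤ θ + m then (1:ℝ) else 0) else 0)) := by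
        refine Finset.sum_congr rfl fun i _ => Finset.sum_congr rfl fun j _ => ?_
        by_cases hij : i ≠ j
        · rw [hφup]
          by_cases hc : (X i ω + X j ω)/2 ≤ θ + m <;> simp [hij, hc]
        · simp [hij]
      rw [hid]
      rw [Finset.sum_congr rfl fun i (_ : i ∈ univ) => Finset.sum_sub_distrib
        (fun j => if i ≠ j then (1:ℝ) else 0) _, Finset.sum_sub_distrib,
        HLthm.sum_offdiag_one]
      rw [mul_sub]
      have hone' : 1 / N * N = 1 := by field_simp
      rw [hone']
      have hUn' := hUn ω (θ + m)
      rw [← hUn']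
      linarith
    · -- lower deviation
      right
      obtain ⟨u, huS, hult⟩ := exists_lt_of_csInf_lt hSne
        (show sInf Sω < θ - z by rw [← hθhat ω]; linarith)
      show 1/2 ≤ (1 / ((n:ℝ) * ((n:ℝ)-1))) * ∑ i : Fin n, ∑ j : Fin n,
          (if i ≠ j then φdn (X i ω) (X j ω) else 0)
      have heq : (1 / ((n:ℝ) * ((n:ℝ)-1))) * (∑ i : Fin n, ∑ j : Fin n,
          (if i ≠ j then φdn (X i ω) (X j ω) else 0)) = Un ω (θ - m) := (hUn ω (θ - m)).symm
      rw [heq]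
      have hu2 : (1:ℝ)/2 ≤ Un ω u := huS
      have := hUnmono u (θ - m) (by linarith)
      linarith
  -- assemble
  have hmeaschain : (ℙ {ω | |θhat ω - θ| > z}).toReal ≤ (ℙ Aup).toReal + (ℙ Adn).toReal := by
    have hstep1 : ℙ {ω | |θhat ω - θ| > z} ≤ ℙ Aup + ℙ Adn :=
      le_trans (measure_mono hsub) (measure_union_le Aup Adn)
    have htop : ℙ Aup + ℙ Adn ≠ ⊤ :=
      ENNReal.add_ne_top.mpr ⟨measure_ne_top _ _, measure_ne_top _ _⟩
    have := ENNReal.toReal_mono htop hstep1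
    rwa [ENNReal.toReal_add (measure_ne_top _ _) (measure_ne_top _ _)] at this
  have hfinal : Real.sqrt (1 - 4*a^2) ^ (n/2) ≤ Real.exp (-((n:ℝ) * a^2)) :=
    HLthm5.final_arith hn rfl ha0 hcase
  calc (ℙ {ω | |θhat ω - θ| > z}).toReal
      ≤ (ℙ Aup).toReal + (ℙ Adn).toReal := hmeaschain
    _ ≤ Real.sqrt (1 - 4*a^2) ^ (n/2) + Real.sqrt (1 - 4*a^2) ^ (n/2) := add_le_add Pup Pdn
    _ = 2 * Real.sqrt (1 - 4*a^2) ^ (n/2) := by ring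
    _ ≤ 2 * Real.exp (-((n:ℝ) * a^2)) := by linarith
    _ = 2 * Real.exp (-(n : ℝ) * κ₀ ^ 2 * m ^ 2) := by rw [hexp_eq]
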